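/- Let X be a nontrivial complex Banach space and G ⊆ X a bounded balanced domain. For every r₀ with 1/3 < r₀ < 1 there exist a holomorphic function f : G → ℂ with values in the right half-plane ℍ = {z : Re z > 0} (with power series expansion f(x) = f(0) + Σ_{m≥1} (1/m!) D^m f(0)(x^m) at 0) and a point x ∈ r₀·G such that Σ_{m≥1} |(1/m!) D^m f(0)(x^m)| > Re f(0). Hence the constant 1/3 in the Bohr inequality for H(G, ℍ) is best possible. -/

import Mathlib

open scoped Pointwise NNReal ENNReal

set_option maxHeartbeats 1000000 in
set_option maxRecDepth 8000 in
set_option synthInstance.maxHeartbeats 400000 in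
/-- Sharpness of the constant `1/3` in Bohr's theorem for holomorphic maps from a
bounded balanced domain `G` of a nontrivial complex Banach space into the right
half-plane: for any `1/3 < r₀ < 1` there are `f ∈ H(G, ℍ)` and `x ∈ r₀·G` whose
Bohr sum of nonconstant terms exceeds `Re f(0)`. -/
theorem bohr_halfPlane_sharp {X : Type*} [NormedAddCommGroup X] [NormedSpace ℂ X]
    [CompleteSpace X] [Nontrivial X]
    (G : Set X) (hGopen : IsOpen G) (hGconn : IsConnected G)
    (hGbdd : Bornology.IsBounded G)
    (hGbal : ∀ z : ℂ, ‖z‖ ≤ 1 → z • G ⊆ G)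
    (r₀ : ℝ) (hr₀ : 1 / 3 < r₀) (hr₀' : r₀ < 1) :
    ∃ (f : X → ℂ) (p : FormalMultilinearSeries ℂ X ℂ),
      DifferentiableOn ℂ f G ∧ Set.MapsTo f G {z : ℂ | 0 < z.re} ∧
      HasFPowerSeriesAt f p 0 ∧
      ∃ x ∈ (r₀ : ℂ) • G,
        Summable (fun m : ℕ => ‖p (m + 1) (fun _ => x)‖) ∧
        (f 0).re < ∑' m : ℕ, ‖p (m + 1) (fun _ => x)‖ := by
  -- basic facts about G
  have hr₀pos : (0:ℝ) < r₀ := lt_trans (by norm_num) hr₀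
  obtain ⟨g₀, hg₀⟩ := hGconn.nonempty
  have h0G : (0:X) ∈ G := by
    have := hGbal 0 (by norm_num) (Set.smul_mem_smul_set (a := (0:ℂ)) hg₀)
    simpa using this
  obtain ⟨ε, hεpos, hεball⟩ := Metric.isOpen_iff.1 hGopen 0 h0G
  obtain ⟨R, hR⟩ := hGbdd.subset_ball 0
  -- the functional
  obtain ⟨u, hu⟩ := exists_ne (0:X)
  obtain ⟨ℓ, hℓnorm, hℓu⟩ := exists_dual_vector ℂ u (norm_ne_zero_iff.2 hu)
  -- sup of ‖ℓ‖ on G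
  set T : ℝ := sSup ((fun x => ‖ℓ x‖) '' G) with hT
  have hbdd : BddAbove ((fun x => ‖ℓ x‖) '' G) := by
    refine ⟨R, ?_⟩
    rintro - ⟨x, hx, rfl⟩
    calc ‖ℓ x‖ ≤ ‖ℓ‖ * ‖x‖ := ℓ.le_opNorm x
    _ ≤ 1 * R := by
        apply mul_le_mul (le_of_eq hℓnorm) _ (norm_nonneg x) zero_le_one
        simpa using (Metric.mem_ball.1 (hR hx)).le
    _ = R := one_mul R
  have hTle : ∀ x ∈ G, ‖ℓ x‖ ≤ T := fun x hx => le_csSup hbdd ⟨x, hx, rfl⟩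
  have hunorm : (0:ℝ) < ‖u‖ := norm_pos_iff.2 hu
  have hTpos : 0 < T := by
    set v : X := ((↑(ε / (2 * ‖u‖)) : ℂ)) • u with hv
    have humem : v ∈ G := by
      apply hεball
      simp only [hv, Metric.mem_ball, dist_zero_right, norm_smul, Complex.norm_real,
        Real.norm_eq_abs]
      rw [abs_of_pos (by positivity), div_mul_eq_mul_div, mul_comm,
        div_lt_iff₀ (by positivity)]
      nlinarith
    have hle := hTle _ humem
    have hℓval : ‖ℓ v‖ = ε / 2 := by
      rw [hv, map_smul, hℓu, smul_eq_mul, norm_mul]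
      simp only [Complex.norm_real, Real.norm_eq_abs, abs_norm]
      rw [abs_of_pos (by positivity)]
      field_simp
      simp
    rw [hℓval] at hle
    linarith
  -- constants
  set a : ℝ := (1 / (3 * r₀) + 1) / 2 with ha
  have har' : 1 / (3 * r₀) < 1 := by
    rw [div_lt_one (by positivity)]; linarith
  have ha1 : a < 1 := by rw [ha]; linarith
  have hapos : 0 < a := by rw [ha]; positivity
  have haR : 1 / 3 < a * r₀ := by
    have : 1 / (3 * r₀) < a := by rw [ha]; linarith
    calc 1 / 3 = (1 / (3 * r₀)) * r₀ := by field_simp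
    _ < a * r₀ := by nlinarith
  set t : ℝ := (1 / (3 * (a * r₀)) + 1) / 2 with ht
  have harpos : 0 < a * r₀ := by positivity
  have ht' : 1 / (3 * (a * r₀)) < 1 := by
    rw [div_lt_one (by positivity)]; linarith
  have ht1 : t < 1 := by rw [ht]; linarith
  have htpos : 0 < t := by rw [ht]; positivity
  have htR : 1 / 3 < t * (a * r₀) := by
    have h1 : 1 / (3 * (a * r₀)) < t := by rw [ht]; linarith
    calc 1 / 3 = (1 / (3 * (a * r₀))) * (a * r₀) := by field_simp
    _ < t * (a * r₀) := by nlinarith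
  -- witness point
  obtain ⟨-, ⟨y, hyG, rfl⟩, hy⟩ := exists_lt_of_lt_csSup (Set.Nonempty.image _ ⟨g₀, hg₀⟩)
    (show t * T < sSup ((fun x => ‖ℓ x‖) '' G) by
      rw [← hT]; nlinarith)
  -- the functional ψ and the function f
  set ψ : X →L[ℂ] ℂ := ((↑(a / T) : ℂ)) • ℓ with hψ
  have haT : 0 < a / T := div_pos hapos hTpos
  have hψval : ∀ x : X, ‖ψ x‖ = (a / T) * ‖ℓ x‖ := by
    intro x
    rw [hψ]
    simp only [ContinuousLinearMap.smul_apply, norm_smul, Complex.norm_real,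
      Real.norm_eq_abs, smul_eq_mul]
    rw [norm_mul, Complex.norm_real, Real.norm_eq_abs, abs_of_pos haT]
  have hψnorm : ‖ψ‖ ≤ a / T := by
    apply ContinuousLinearMap.opNorm_le_bound _ haT.le
    intro x
    rw [hψval]
    have h := ℓ.le_opNorm x
    rw [hℓnorm, one_mul] at h
    exact mul_le_mul_of_nonneg_left h haT.le
  have hψG : ∀ x ∈ G, ‖ψ x‖ ≤ a := by
    intro x hx
    rw [hψval]
    calc (a / T) * ‖ℓ x‖ ≤ (a / T) * T :=
        mul_le_mul_of_nonneg_left (hTle x hx) haT.le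
    _ = a := div_mul_cancel₀ a hTpos.ne'
  have hden : ∀ w : ℂ, ‖w‖ < 1 → 1 + w ≠ 0 := by
    intro w hw h
    have : w = -1 := by linear_combination h
    rw [this] at hw; simp at hw
  set f : X → ℂ := fun x => 2 / (1 + ψ x) - 1 with hf
  set p : FormalMultilinearSeries ℂ X ℂ := (fun n =>
    (if n = 0 then (1:ℂ) else 2 * (-1)^n) •
      (ContinuousMultilinearMap.mkPiAlgebraFin ℂ n ℂ).compContinuousLinearMap
        (fun _ => ψ)) with hp
  have hpapply : ∀ (n : ℕ) (x : X),
      (p n) (fun _ => x) = (if n = 0 then (1:ℂ) else 2 * (-1)^n) * (ψ x)^n := by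
    intro n x
    rw [hp]
    simp only [ContinuousMultilinearMap.smul_apply,
      ContinuousMultilinearMap.compContinuousLinearMap_apply,
      ContinuousMultilinearMap.mkPiAlgebraFin_apply, List.ofFn_const,
      List.prod_replicate, smul_eq_mul]
  refine ⟨f, p, ?_, ?_, ?_, ?_⟩
  · -- differentiable
    have h1 : DifferentiableOn ℂ (fun x : X => 1 + ψ x) G :=
      (ψ.differentiable.const_add 1).differentiableOn
    have h2 : DifferentiableOn ℂ (fun x : X => 2 * (1 + ψ x)⁻¹) G :=
      (h1.inv (fun x hx => hden _ (lt_of_le_of_lt (hψG x hx) ha1))).const_mul 2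
    have h3 := h2.sub_const 1
    simp only [hf]
    simpa only [div_eq_mul_inv] using h3
  · -- maps to half plane
    intro x hx
    have hw : ‖ψ x‖ < 1 := lt_of_le_of_lt (hψG x hx) ha1
    have hne : 1 + ψ x ≠ 0 := hden _ hw
    have heq : f x = (1 - ψ x) / (1 + ψ x) := by
      simp only [hf]
      field_simp
      ring
    simp only [Set.mem_setOf_eq, heq]
    rw [Complex.div_re]
    have hnsq : 0 < Complex.normSq (1 + ψ x) := Complex.normSq_pos.2 hne
    have hkey : (1 - ψ x).re * (1 + ψ x).re + (1 - ψ x).im * (1 + ψ x).im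
        = 1 - Complex.normSq (ψ x) := by
      simp [Complex.normSq_apply]; ring
    rw [← add_div, hkey]
    apply div_pos _ hnsq
    have : Complex.normSq (ψ x) < 1 := by
      rw [← Complex.sq_norm]
      nlinarith [hw, norm_nonneg (ψ x)]
    linarith
  · -- power series
    refine ⟨((T / a).toNNReal : ENNReal), ?_, ?_, ?_⟩
    · -- radius bound
      apply FormalMultilinearSeries.le_radius_of_bound _ 2
      intro n
      have hcoe : (((T / a).toNNReal : ℝ≥0) : ℝ) = T / a :=
        Real.coe_toNNReal _ (div_pos hTpos hapos).le
      rw [hcoe]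
      have hpn : ‖p n‖ ≤ 2 * (a / T) ^ n := by
        simp only [hp]
        refine le_trans (ContinuousMultilinearMap.opNorm_smul_le _ _) ?_
        have h1 : ‖(ContinuousMultilinearMap.mkPiAlgebraFin ℂ n ℂ).compContinuousLinearMap
            (fun _ => ψ)‖ ≤ (a / T) ^ n := by
          refine le_trans (ContinuousMultilinearMap.norm_compContinuousLinearMap_le _ _) ?_
          rw [ContinuousMultilinearMap.norm_mkPiAlgebraFin, one_mul]
          calc ∏ _i : Fin n, ‖ψ‖ ≤ ∏ _i : Fin n, (a / T) :=
              Finset.prod_le_prod (fun _ _ => norm_nonneg _) (fun _ _ => hψnorm)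
          _ = (a / T) ^ n := by rw [Finset.prod_const, Finset.card_univ, Fintype.card_fin]
        have h2 : ‖(if n = 0 then (1:ℂ) else 2 * (-1)^n)‖ ≤ 2 := by
          split_ifs <;> simp
        exact mul_le_mul h2 h1 (norm_nonneg _) (by norm_num)
      calc ‖p n‖ * (T / a) ^ n ≤ (2 * (a / T) ^ n) * (T / a) ^ n :=
          mul_le_mul_of_nonneg_right hpn (by positivity)
      _ = 2 := by
          rw [mul_assoc, ← mul_pow]
          rw [div_mul_div_comm]
          rw [mul_comm a T, div_self (by positivity), one_pow, mul_one]
    · -- r_pos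
      exact_mod_cast Real.toNNReal_pos.2 (div_pos hTpos hapos)
    · -- hasSum
      intro y hy
      rw [mem_emetric_ball_zero_iff, enorm_eq_nnnorm, ENNReal.coe_lt_coe,
        Real.lt_toNNReal_iff_coe_lt, coe_nnnorm] at hy
      have hw : ‖ψ y‖ < 1 := by
        calc ‖ψ y‖ ≤ ‖ψ‖ * ‖y‖ := ψ.le_opNorm y
        _ ≤ (a / T) * ‖y‖ := mul_le_mul_of_nonneg_right hψnorm (norm_nonneg y)
        _ < (a / T) * (T / a) := by
            exact mul_lt_mul_of_pos_left hy haT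
        _ = 1 := by field_simp
      have base : HasSum (fun n : ℕ => (-(ψ y)) ^ n) (1 - -(ψ y))⁻¹ :=
        hasSum_geometric_of_norm_lt_one (by simpa using hw)
      have h2 := base.mul_left 2
      have h3 := h2.update 0 1
      have hfun : (fun n : ℕ => (p n) (fun _ => y)) =
          Function.update (fun n : ℕ => 2 * (-(ψ y)) ^ n) 0 1 := by
        funext n
        rw [hpapply]
        rcases n with _ | n
        · simp
        · rw [Function.update_of_ne (Nat.succ_ne_zero n)]
          simp only [Nat.succ_ne_zero, if_false, pow_succ]
          ring
      have hval : f (0 + y) = 1 - 2 * (-(ψ y)) ^ 0 + 2 * (1 - -(ψ y))⁻¹ := by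
        simp only [hf, zero_add, pow_zero, mul_one, sub_neg_eq_add, div_eq_mul_inv]
        ring
      rw [hfun, hval]
      exact h3
  · -- witness
    refine ⟨(r₀ : ℂ) • y, Set.smul_mem_smul_set hyG, ?_⟩
    set x : X := (r₀ : ℂ) • y with hx
    set s : ℝ := ‖ψ x‖ with hs
    have hsval : s = (a / T) * (r₀ * ‖ℓ y‖) := by
      rw [hs, hψval, hx, map_smul, smul_eq_mul, norm_mul, Complex.norm_real,
        Real.norm_eq_abs, abs_of_pos hr₀pos]
    have hs1 : s < 1 := by
      rw [hsval]
      calc (a / T) * (r₀ * ‖ℓ y‖) ≤ (a / T) * (r₀ * T) :=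
          mul_le_mul_of_nonneg_left
            (mul_le_mul_of_nonneg_left (hTle y hyG) hr₀pos.le) haT.le
      _ = a * r₀ := by field_simp
      _ < 1 := by nlinarith
    have hs3 : 1 / 3 < s := by
      rw [hsval]
      have : (a / T) * (r₀ * (t * T)) < (a / T) * (r₀ * ‖ℓ y‖) :=
        mul_lt_mul_of_pos_left (mul_lt_mul_of_pos_left hy hr₀pos) haT
      have heq2 : (a / T) * (r₀ * (t * T)) = t * (a * r₀) := by field_simp
      linarith [heq2 ▸ this, htR]
    have hs0 : 0 ≤ s := norm_nonneg _
    have hterm : ∀ m : ℕ, ‖(p (m + 1)) (fun _ => x)‖ = 2 * s ^ (m + 1) := by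
      intro m
      rw [hpapply]
      simp [norm_mul, norm_pow, ← hs]
    constructor
    · apply Summable.congr (((summable_geometric_of_lt_one hs0 hs1).mul_left (2 * s)))
      intro m
      rw [hterm]
      ring
    · have hf0 : (f 0).re = 1 := by
        simp [hf]
        norm_num
      rw [hf0, tsum_congr hterm]
      have h1 : ∀ m : ℕ, 2 * s ^ (m + 1) = (2 * s) * s ^ m := fun m => by ring
      rw [tsum_congr h1, tsum_mul_left, tsum_geometric_of_lt_one hs0 hs1,
        ← div_eq_mul_inv, lt_div_iff₀ (by linarith)]
      linarith
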